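/- Let m ≥ 1, k, l ∈ ℕ, let P : ℝ^m → ℝ_{0,m} be a left monogenic function (∂_x P = 0) that is homogeneous of degree k and satisfies Σ_{j=1}^m e_j P(x) e_j = (−1)^l (2l − m) P(x) for all x, and let B : (0,∞) → ℝ be continuously differentiable. Then for all x ≠ 0, writing r = |x|, the right Dirac derivative satisfies (B(r) ι(x) P(x))∂_x = (−1)^l(2l−m) B(r) P(x) + (B′(r)/r) ι(x) P(x) ι(x). -/

import Mathlib

noncomputable section

open scoped BigOperators

/-- The `ℓ¹`-norm with respect to a Hamel basis.  On a finite-dimensional real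
vector space (such as the Clifford algebra `ℝ_{0,m}`) the induced topology is
the canonical one. -/
def hamelNorm (V : Type) [AddCommGroup V] [Module ℝ V] : AddGroupNorm V where
  toFun v := ∑ i ∈ ((Module.Basis.ofVectorSpace ℝ V).repr v).support,
      |(Module.Basis.ofVectorSpace ℝ V).repr v i|
  map_zero' := by simp
  add_le' := by
    intro x y
    classical
    set b := Module.Basis.ofVectorSpace ℝ V
    have hrepr : b.repr (x + y) = b.repr x + b.repr y := map_add _ _ _
    calc ∑ i ∈ (b.repr (x + y)).support, |b.repr (x + y) i|
        ≤ ∑ i ∈ (b.repr x).support ∪ (b.repr y).support, |b.repr (x + y) i| := by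
          refine Finset.sum_le_sum_of_subset_of_nonneg ?_ (fun i _ _ => abs_nonneg _)
          rw [hrepr]; exact Finsupp.support_add
      _ ≤ ∑ i ∈ (b.repr x).support ∪ (b.repr y).support, (|b.repr x i| + |b.repr y i|) := by
          refine Finset.sum_le_sum fun i _ => ?_
          rw [hrepr, Finsupp.add_apply]; exact abs_add_le _ _
      _ = (∑ i ∈ (b.repr x).support ∪ (b.repr y).support, |b.repr x i|)
            + ∑ i ∈ (b.repr x).support ∪ (b.repr y).support, |b.repr y i| :=
          Finset.sum_add_distrib
      _ = (∑ i ∈ (b.repr x).support, |b.repr x i|)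
            + ∑ i ∈ (b.repr y).support, |b.repr y i| := by
          rw [← Finset.sum_subset Finset.subset_union_left
              (fun i _ hi => by simp [Finsupp.notMem_support_iff.mp hi]),
            ← Finset.sum_subset Finset.subset_union_right
              (fun i _ hi => by simp [Finsupp.notMem_support_iff.mp hi])]
  neg' := by
    intro x
    simp [map_neg]
  eq_zero_of_map_eq_zero' := by
    classical
    intro x hx
    set b := Module.Basis.ofVectorSpace ℝ V
    have h0 : b.repr x = 0 := by
      ext i
      by_cases hi : i ∈ (b.repr x).support
      · exact abs_eq_zero.mp
          ((Finset.sum_eq_zero_iff_of_nonneg (fun i _ => abs_nonneg _)).mp hx i hi)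
      · simpa using Finsupp.notMem_support_iff.mp hi
    exact b.repr.map_eq_zero_iff.mp h0

/-- The quadratic form `Q(v) = -‖v‖²` on `ℝ^m`. -/
def Qneg (m : ℕ) : QuadraticForm ℝ (EuclideanSpace ℝ (Fin m)) :=
  (QuadraticMap.weightedSumSquares ℝ fun _ : Fin m => (-1 : ℝ)).comp
    (WithLp.linearEquiv 2 ℝ (Fin m → ℝ)).toLinearMap

/-- The real Clifford algebra `ℝ_{0,m}`. -/
abbrev Cl (m : ℕ) := CliffordAlgebra (Qneg m)

/-- The canonical embedding `ι : ℝ^m → ℝ_{0,m}`. -/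
abbrev ιC (m : ℕ) : EuclideanSpace ℝ (Fin m) →ₗ[ℝ] Cl m := CliffordAlgebra.ι (Qneg m)

/-- The generators `e₁, …, e_m` of `ℝ_{0,m}`. -/
def eC (m : ℕ) (j : Fin m) : Cl m := ιC m (EuclideanSpace.single j 1)

noncomputable instance (m : ℕ) : NormedAddCommGroup (Cl m) :=
  (hamelNorm (Cl m)).toNormedAddCommGroup

noncomputable instance (m : ℕ) : NormedSpace ℝ (Cl m) where
  norm_smul_le a v := by
    classical
    have hv : ‖v‖ = ∑ i ∈ ((Module.Basis.ofVectorSpace ℝ (Cl m)).repr v).support,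
        |(Module.Basis.ofVectorSpace ℝ (Cl m)).repr v i| := rfl
    have hav : ‖a • v‖ = ∑ i ∈ ((Module.Basis.ofVectorSpace ℝ (Cl m)).repr (a • v)).support,
        |(Module.Basis.ofVectorSpace ℝ (Cl m)).repr (a • v) i| := rfl
    set b := Module.Basis.ofVectorSpace ℝ (Cl m)
    have hrepr : b.repr (a • v) = a • b.repr v := map_smul _ _ _
    rw [hav, hv, Real.norm_eq_abs]
    calc ∑ i ∈ (b.repr (a • v)).support, |b.repr (a • v) i|
        ≤ ∑ i ∈ (b.repr v).support, |b.repr (a • v) i| := by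
          refine Finset.sum_le_sum_of_subset_of_nonneg ?_ (fun i _ _ => abs_nonneg _)
          rw [hrepr]; exact Finsupp.support_smul
      _ = ∑ i ∈ (b.repr v).support, |a| * |b.repr v i| := by
          refine Finset.sum_congr rfl fun i _ => ?_
          rw [hrepr, Finsupp.smul_apply, smul_eq_mul, abs_mul]
      _ = |a| * ∑ i ∈ (b.repr v).support, |b.repr v i| := by rw [Finset.mul_sum]

/-- The Dirac operator acting from the left: `∂_x f = Σⱼ eⱼ (∂_{xⱼ} f)`. -/
def diracL (m : ℕ) (f : EuclideanSpace ℝ (Fin m) → Cl m) (x : EuclideanSpace ℝ (Fin m)) : Cl m :=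
  ∑ j, eC m j * fderiv ℝ f x (EuclideanSpace.single j 1)

/-- The Dirac operator acting from the right: `f ∂_x = Σⱼ (∂_{xⱼ} f) eⱼ`. -/
def diracR (m : ℕ) (f : EuclideanSpace ℝ (Fin m) → Cl m) (x : EuclideanSpace ℝ (Fin m)) : Cl m :=
  ∑ j, fderiv ℝ f x (EuclideanSpace.single j 1) * eC m j



section Aux
variable (m : ℕ)

theorem Qneg_single (j : Fin m) : Qneg m (EuclideanSpace.single j 1) = -1 := by
  simp [Qneg, QuadraticMap.weightedSumSquares_apply, Pi.single_apply, ite_mul,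
    Finset.sum_ite_eq']

theorem polar_single (i j : Fin m) (h : i ≠ j) :
    QuadraticMap.polar (Qneg m) (EuclideanSpace.single i 1) (EuclideanSpace.single j 1) = 0 := by
  simp [QuadraticMap.polar, Qneg, QuadraticMap.weightedSumSquares_apply, Pi.single_apply,
    add_mul, mul_add, ite_mul, mul_ite, Finset.sum_add_distrib, Finset.sum_ite_eq', h, h.symm]

theorem eC_sq (j : Fin m) : eC m j * eC m j = -1 := by
  rw [eC, ιC, CliffordAlgebra.ι_sq_scalar, Qneg_single]; simp

theorem eC_anticomm {i j : Fin m} (h : i ≠ j) : eC m i * eC m j = -(eC m j * eC m i) := by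
  have := CliffordAlgebra.ι_mul_ι_add_swap (Q := Qneg m)
    (EuclideanSpace.single i 1) (EuclideanSpace.single j 1)
  rw [polar_single m i j h] at this
  simp only [map_zero] at this
  exact eq_neg_of_add_eq_zero_left this

/-- Product of basis generators over a finite index set, in increasing order. -/
def prodS (S : Finset (Fin m)) : Cl m := ((S.sort (· ≤ ·)).map (eC m)).prod

theorem prodS_empty : prodS m ∅ = 1 := by simp [prodS]

theorem prodS_insert {a : Fin m} {s : Finset (Fin m)} (h : ∀ b ∈ s, a < b) :
    prodS m (insert a s) = eC m a * prodS m s := by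
  have ha : a ∉ s := fun hmem => lt_irrefl a (h a hmem)
  rw [prodS, Finset.sort_insert (· ≤ ·) (fun b hb => (h b hb).le) ha, List.map_cons,
    List.prod_cons, prodS]

theorem eC_mul_prodS (S : Finset (Fin m)) :
    ∀ j, ∃ ε : ℝ, (ε = 1 ∨ ε = -1) ∧
      eC m j * prodS m S = ε • prodS m (if j ∈ S then S.erase j else insert j S) := by
  induction S using Finset.induction_on_min with
  | empty =>
    intro j
    refine ⟨1, Or.inl rfl, ?_⟩
    rw [if_neg (Finset.notMem_empty j), one_smul, prodS_empty, mul_one,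
      prodS_insert m (fun b hb => absurd hb (Finset.notMem_empty b)), prodS_empty, mul_one]
  | insert a s ha IH =>
    intro j
    have has : a ∉ s := fun h => lt_irrefl a (ha a h)
    have hins : prodS m (insert a s) = eC m a * prodS m s := prodS_insert m ha
    rcases lt_trichotomy j a with hja | hje | haj
    · have hjs : j ∉ s := fun h => absurd (hja.trans (ha j h)) (lt_irrefl j)
      have hjS : j ∉ insert a s := by
        simp only [Finset.mem_insert]
        rintro (rfl | h)
        · exact lt_irrefl j hja
        · exact hjs h
      refine ⟨1, Or.inl rfl, ?_⟩
      have hb : ∀ b ∈ insert a s, j < b := by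
        intro b hb
        rcases Finset.mem_insert.mp hb with rfl | hb
        · exact hja
        · exact hja.trans (ha b hb)
      rw [if_neg hjS, one_smul, prodS_insert m hb]
    · refine ⟨-1, Or.inr rfl, ?_⟩
      rw [hje, if_pos (Finset.mem_insert_self a s), Finset.erase_insert has, hins, ← mul_assoc,
        eC_sq]
      simp
    · obtain ⟨ε, hε, heq⟩ := IH j
      have hja : j ≠ a := ne_of_gt haj
      refine ⟨-ε, by rcases hε with h | h <;> simp [h], ?_⟩
      set t := if j ∈ s then s.erase j else insert j s with ht
      have hat : ∀ b ∈ t, a < b := by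
        intro b hb
        rw [ht] at hb
        split_ifs at hb with hjs
        · exact ha b (Finset.mem_of_mem_erase hb)
        · rcases Finset.mem_insert.mp hb with rfl | hb
          · exact haj
          · exact ha b hb
      have h2 : eC m j * prodS m (insert a s) = (-ε) • prodS m (insert a t) := by
        rw [hins, ← mul_assoc, eC_anticomm m hja, neg_mul, mul_assoc, heq, mul_smul_comm,
          prodS_insert m hat, neg_smul]
      have h3 : (if j ∈ insert a s then (insert a s).erase j else insert j (insert a s))
          = insert a t := by
        rw [ht]
        by_cases hjs : j ∈ s
        · rw [if_pos (Finset.mem_insert_of_mem hjs), if_pos hjs,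
            Finset.erase_insert_of_ne hja.symm]
        · have : j ∉ insert a s := by
            simp only [Finset.mem_insert]; rintro (rfl | h); exacts [hja rfl, hjs h]
          rw [if_neg this, if_neg hjs, Finset.insert_comm]
      rw [h3]
      exact h2

theorem ιC_eq_sum (v : EuclideanSpace ℝ (Fin m)) : ιC m v = ∑ j, v j • eC m j := by
  have hv : v = ∑ j, v j • EuclideanSpace.single j (1 : ℝ) := by
    have := (EuclideanSpace.basisFun (Fin m) ℝ).sum_repr v
    simpa [EuclideanSpace.basisFun_apply, EuclideanSpace.basisFun_repr] using this.symm
  conv_lhs => rw [hv]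
  rw [map_sum]
  exact Finset.sum_congr rfl fun j _ => by rw [map_smul]; rfl

theorem span_prodS : Submodule.span ℝ (Set.range (prodS m)) = ⊤ := by
  rw [eq_top_iff]
  intro x hx
  clear hx
  induction x using CliffordAlgebra.left_induction with
  | algebraMap r =>
    have : (algebraMap ℝ (Cl m)) r = r • prodS m ∅ := by
      rw [prodS_empty, Algebra.algebraMap_eq_smul_one]
    rw [this]
    exact Submodule.smul_mem _ _ (Submodule.subset_span ⟨∅, rfl⟩)
  | add x y hx hy => exact Submodule.add_mem _ hx hy
  | ι_mul x v hx =>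
    induction hx using Submodule.span_induction with
    | mem z hz =>
      obtain ⟨S, rfl⟩ := hz
      rw [ιC_eq_sum, Finset.sum_mul]
      refine Submodule.sum_mem _ fun j _ => ?_
      rw [smul_mul_assoc]
      obtain ⟨ε, _, heq⟩ := eC_mul_prodS m S j
      rw [heq]
      exact Submodule.smul_mem _ _ (Submodule.smul_mem _ _ (Submodule.subset_span ⟨_, rfl⟩))
    | zero => rw [mul_zero]; exact Submodule.zero_mem _
    | add y z _ _ hy hz => rw [mul_add]; exact Submodule.add_mem _ hy hz
    | smul c y _ hy => rw [mul_smul_comm]; exact Submodule.smul_mem _ _ hy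

instance : Module.Finite ℝ (Cl m) := by
  classical
  exact ⟨⟨Finset.image (prodS m) Finset.univ, by
    rw [Finset.coe_image, Finset.coe_univ, Set.image_univ]; exact span_prodS m⟩⟩

example : FiniteDimensional ℝ (Cl m) := inferInstance

end Aux

section Aux2

theorem hasFDerivAt_norm_euclidean {m : ℕ} {x : EuclideanSpace ℝ (Fin m)} (hx : x ≠ 0) :
    HasFDerivAt (fun y : EuclideanSpace ℝ (Fin m) => ‖y‖) (‖x‖⁻¹ • innerSL ℝ x) x := by
  have hr : (0:ℝ) < ‖x‖ := norm_pos_iff.mpr hx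
  have h1 : HasFDerivAt (fun y : EuclideanSpace ℝ (Fin m) => ‖y‖ ^ 2)
      (2 • (innerSL ℝ x)) x := (hasStrictFDerivAt_norm_sq x).hasFDerivAt
  have h2 : HasDerivAt Real.sqrt (1 / (2 * Real.sqrt (‖x‖ ^ 2))) (‖x‖ ^ 2) :=
    Real.hasDerivAt_sqrt (by positivity)
  have h3 := h2.comp_hasFDerivAt x h1
  have heq : (Real.sqrt ∘ fun y : EuclideanSpace ℝ (Fin m) => ‖y‖ ^ 2)
      = fun y : EuclideanSpace ℝ (Fin m) => ‖y‖ := funext fun y => by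
    simp [Function.comp, Real.sqrt_sq (norm_nonneg y)]
  rw [heq] at h3
  refine h3.congr_fderiv (Eq.symm ?_)
  rw [Real.sqrt_sq (norm_nonneg x)]
  ext y
  simp only [ContinuousLinearMap.coe_smul', Pi.smul_apply, smul_eq_mul, two_smul,
    ContinuousLinearMap.add_apply]
  field_simp
  ring

theorem eC_conj_sum (m : ℕ) (c : ℝ) {b : Cl m} (hb : ∑ j, eC m j * b * eC m j = c • b)
    (i : Fin m) :
    ∑ j, eC m j * (eC m i * b) * eC m j
      = -(c • (eC m i * b)) + (-(2:ℝ)) • (b * eC m i) := by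
  have hterm : ∀ j : Fin m, eC m j * (eC m i * b) * eC m j
      = -(eC m i * (eC m j * b * eC m j)) + (if j = i then (-(2:ℝ)) • (b * eC m i) else 0) := by
    intro j
    by_cases hji : j = i
    · subst hji
      rw [if_pos rfl]
      have l1 : eC m j * (eC m j * b) * eC m j = -(b * eC m j) := by
        rw [← mul_assoc (eC m j) (eC m j) b, eC_sq, neg_one_mul, neg_mul]
      have r1 : eC m j * (eC m j * b * eC m j) = -(b * eC m j) := by
        rw [← mul_assoc, ← mul_assoc (eC m j) (eC m j) b, eC_sq, neg_one_mul, neg_mul]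
      rw [l1, r1]
      module
    · rw [if_neg hji, ← mul_assoc (eC m j) (eC m i) b, eC_anticomm m hji]
      simp [mul_assoc]
  calc ∑ j, eC m j * (eC m i * b) * eC m j
      = ∑ j, (-(eC m i * (eC m j * b * eC m j))
          + (if j = i then (-(2:ℝ)) • (b * eC m i) else 0)) :=
        Finset.sum_congr rfl fun j _ => hterm j
    _ = -(eC m i * ∑ j, eC m j * b * eC m j) + (-(2:ℝ)) • (b * eC m i) := by
        rw [Finset.sum_add_distrib, Finset.sum_ite_eq' Finset.univ i, if_pos (Finset.mem_univ i),
          Finset.sum_neg_distrib, ← Finset.mul_sum]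
    _ = -(c • (eC m i * b)) + (-(2:ℝ)) • (b * eC m i) := by rw [hb, mul_smul_comm]

theorem rightDirac_zero (m : ℕ) (c : ℝ) (b : Fin m → Cl m)
    (hmono : ∑ j, eC m j * b j = 0)
    (hb : ∀ i, ∑ j, eC m j * b i * eC m j = c • b i) :
    ∑ i, b i * eC m i = 0 := by
  have h0 : (0 : Cl m) = ∑ i, (-(c • (eC m i * b i)) + (-(2:ℝ)) • (b i * eC m i)) := by
    calc (0 : Cl m) = ∑ j, eC m j * (∑ i, eC m i * b i) * eC m j := by
          rw [hmono]; simp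
      _ = ∑ j, ∑ i, eC m j * (eC m i * b i) * eC m j := by
          refine Finset.sum_congr rfl fun j _ => ?_
          rw [Finset.mul_sum, Finset.sum_mul]
      _ = ∑ i, ∑ j, eC m j * (eC m i * b i) * eC m j := Finset.sum_comm
      _ = ∑ i, (-(c • (eC m i * b i)) + (-(2:ℝ)) • (b i * eC m i)) :=
          Finset.sum_congr rfl fun i _ => eC_conj_sum m c (hb i) i
  rw [Finset.sum_add_distrib, Finset.sum_neg_distrib, ← Finset.smul_sum, ← Finset.smul_sum,
    hmono, smul_zero, neg_zero, zero_add] at h0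
  rcases smul_eq_zero.mp h0.symm with h | h
  · norm_num at h
  · exact h

theorem fderiv_conj_rel (m : ℕ) (c : ℝ) (P : EuclideanSpace ℝ (Fin m) → Cl m)
    (hP : Differentiable ℝ P)
    (hPl : ∀ x, ∑ j, eC m j * P x * eC m j = c • P x)
    (x v : EuclideanSpace ℝ (Fin m)) :
    ∑ j, eC m j * (fderiv ℝ P x v) * eC m j = c • fderiv ℝ P x v := by
  set L : Cl m →ₗ[ℝ] Cl m :=
    (∑ j, (LinearMap.mulRight ℝ (eC m j)).comp (LinearMap.mulLeft ℝ (eC m j)))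
      - c • LinearMap.id with hL
  have hL0 : ∀ a : Cl m, L a = (∑ j, eC m j * a * eC m j) - c • a := by
    intro a
    simp [hL, LinearMap.sum_apply]
  have hzero : (fun y => (L.toContinuousLinearMap) (P y))
      = fun _ : EuclideanSpace ℝ (Fin m) => (0 : Cl m) := funext fun y => by
    show L (P y) = 0
    rw [hL0, hPl y, sub_self]
  have h1 : HasFDerivAt (fun y => L.toContinuousLinearMap (P y))
      (L.toContinuousLinearMap.comp (fderiv ℝ P x)) x :=
    L.toContinuousLinearMap.hasFDerivAt.comp x (hP x).hasFDerivAt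
  rw [hzero] at h1
  have h2 : L.toContinuousLinearMap.comp (fderiv ℝ P x) = 0 := by
    rw [h1.fderiv.symm, fderiv_const_apply]
  have h3 : L (fderiv ℝ P x v) = 0 := by
    have := congrArg (fun T : EuclideanSpace ℝ (Fin m) →L[ℝ] Cl m => T v) h2
    simpa using this
  rw [hL0] at h3
  exact sub_eq_zero.mp h3

/-- multiplication as a continuous bilinear map -/
def mulCL (m : ℕ) : Cl m →L[ℝ] Cl m →L[ℝ] Cl m :=
  LinearMap.toContinuousLinearMap
    ((LinearMap.toContinuousLinearMap :
        (Cl m →ₗ[ℝ] Cl m) ≃ₗ[ℝ] (Cl m →L[ℝ] Cl m)).toLinearMap.comp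
      (LinearMap.mul ℝ (Cl m)))

theorem mulCL_apply (m : ℕ) (a b : Cl m) : mulCL m a b = a * b := rfl

end Aux2

/-- `(B(r) ι(x) P(x))∂_x = (-1)^l(2l-m) B(r) P(x)
+ (B′(r)/r) ι(x) P(x) ι(x)`. -/
theorem diracR_B_smul_xP (m k l : ℕ) (hm : 1 ≤ m) (P : EuclideanSpace ℝ (Fin m) → Cl m)
    (hP : ContDiff ℝ 1 P) (hPmono : ∀ x, diracL m P x = 0)
    (hPhom : ∀ (t : ℝ) (x : EuclideanSpace ℝ (Fin m)), P (t • x) = t ^ k • P x)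
    (hPl : ∀ x, ∑ j, eC m j * P x * eC m j
      = ((-1 : ℝ) ^ l * (2 * (l : ℝ) - (m : ℝ))) • P x)
    (B : ℝ → ℝ) (hB : ContDiffOn ℝ 1 B (Set.Ioi 0))
    (x : EuclideanSpace ℝ (Fin m)) (hx : x ≠ 0) :
    diracR m (fun y => B ‖y‖ • (ιC m y * P y)) x
      = ((-1 : ℝ) ^ l * (2 * (l : ℝ) - (m : ℝ)) * B ‖x‖) • P x
        + (deriv B ‖x‖ / ‖x‖) • (ιC m x * P x * ιC m x) := by
  classical
  have hr : (0:ℝ) < ‖x‖ := norm_pos_iff.mpr hx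
  set c : ℝ := (-1 : ℝ) ^ l * (2 * (l : ℝ) - (m : ℝ)) with hc
  set P' := fderiv ℝ P x with hP'
  set ιL := LinearMap.toContinuousLinearMap (ιC m) with hιL
  have hBd : HasDerivAt B (deriv B ‖x‖) ‖x‖ :=
    ((hB.contDiffAt (Ioi_mem_nhds hr)).differentiableAt one_ne_zero).hasDerivAt
  have hN := hasFDerivAt_norm_euclidean hx
  have hφ : HasFDerivAt (fun y : EuclideanSpace ℝ (Fin m) => B ‖y‖)
      (deriv B ‖x‖ • (‖x‖⁻¹ • innerSL ℝ x)) x := hBd.comp_hasFDerivAt x hN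
  have hPd : HasFDerivAt P P' x := (hP.differentiable one_ne_zero x).hasFDerivAt
  have hιd : HasFDerivAt (fun y => ιC m y) ιL x := ιL.hasFDerivAt
  have hg : HasFDerivAt (fun y => ιC m y * P y)
      ((mulCL m).precompR _ (ιC m x) P' + (mulCL m).precompL _ ιL (P x)) x :=
    (mulCL m).hasFDerivAt_of_bilinear hιd hPd
  have hf := hφ.smul hg
  have hfd := hf.fderiv
  have hval : ∀ j : Fin m,
      fderiv ℝ (fun y => B ‖y‖ • (ιC m y * P y)) x (EuclideanSpace.single j 1)
      = B ‖x‖ • (ιC m x * P' (EuclideanSpace.single j 1)) + B ‖x‖ • (eC m j * P x)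
        + (deriv B ‖x‖ * (‖x‖⁻¹ * x j)) • (ιC m x * P x) := by
    intro j
    rw [show (fun y => B ‖y‖ • (ιC m y * P y)) = ((fun y : EuclideanSpace ℝ (Fin m) => B ‖y‖) • fun y : EuclideanSpace ℝ (Fin m) => ιC m y * P y) from rfl, hfd]
    have h1 : (innerSL ℝ x) (EuclideanSpace.single j 1) = x j := by
      simp [EuclideanSpace.inner_single_right]
    simp only [ContinuousLinearMap.add_apply, ContinuousLinearMap.coe_smul', Pi.smul_apply,
      ContinuousLinearMap.smulRight_apply, ContinuousLinearMap.precompR,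
      ContinuousLinearMap.precompL_apply, ContinuousLinearMap.comp_apply,
      ContinuousLinearMap.compL_apply, ContinuousLinearMap.flip_apply, h1,
      smul_eq_mul, smul_add]
    rw [mulCL_apply, mulCL_apply]
    have h2 : ιL (EuclideanSpace.single j 1) = eC m j := rfl
    rw [h2]
    try module
  have hkey : ∑ j, P' (EuclideanSpace.single j 1) * eC m j = 0 := by
    refine rightDirac_zero m c (fun j => P' (EuclideanSpace.single j 1)) ?_ ?_
    · exact hPmono x
    · intro i
      exact fderiv_conj_rel m c P (hP.differentiable one_ne_zero) hPl x (EuclideanSpace.single i 1)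
  calc diracR m (fun y => B ‖y‖ • (ιC m y * P y)) x
      = ∑ j, (B ‖x‖ • (ιC m x * P' (EuclideanSpace.single j 1)) + B ‖x‖ • (eC m j * P x)
          + (deriv B ‖x‖ * (‖x‖⁻¹ * x j)) • (ιC m x * P x)) * eC m j := by
        rw [diracR]
        exact Finset.sum_congr rfl fun j _ => by rw [hval j]
    _ = (∑ j, B ‖x‖ • (ιC m x * (P' (EuclideanSpace.single j 1) * eC m j)))
        + (∑ j, B ‖x‖ • (eC m j * P x * eC m j))
        + ∑ j, (deriv B ‖x‖ * ‖x‖⁻¹ * x j) • (ιC m x * P x * eC m j) := by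
        rw [← Finset.sum_add_distrib, ← Finset.sum_add_distrib]
        refine Finset.sum_congr rfl fun j _ => ?_
        rw [add_mul, add_mul, smul_mul_assoc, smul_mul_assoc, smul_mul_assoc, mul_assoc,
          show deriv B ‖x‖ * (‖x‖⁻¹ * x j) = deriv B ‖x‖ * ‖x‖⁻¹ * x j from by ring]
    _ = ((-1 : ℝ) ^ l * (2 * (l : ℝ) - (m : ℝ)) * B ‖x‖) • P x
        + (deriv B ‖x‖ / ‖x‖) • (ιC m x * P x * ιC m x) := by
        have hT1 : ∑ j, B ‖x‖ • (ιC m x * (P' (EuclideanSpace.single j 1) * eC m j))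
            = (0 : Cl m) := by
          rw [← Finset.smul_sum, ← Finset.mul_sum, hkey, mul_zero, smul_zero]
        have hT2 : ∑ j, B ‖x‖ • (eC m j * P x * eC m j) = (c * B ‖x‖) • P x := by
          rw [← Finset.smul_sum, hPl x, smul_smul, mul_comm]
        have hT3 : (∑ j, (deriv B ‖x‖ * ‖x‖⁻¹ * x j) • (ιC m x * P x * eC m j))
            = (deriv B ‖x‖ / ‖x‖) • (ιC m x * P x * ιC m x) := by
          have hterm : ∀ j : Fin m, (deriv B ‖x‖ * ‖x‖⁻¹ * x j) • (ιC m x * P x * eC m j)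
              = (deriv B ‖x‖ * ‖x‖⁻¹) • (ιC m x * P x * (x j • eC m j)) := by
            intro j; rw [mul_smul, mul_smul_comm]
          rw [Finset.sum_congr rfl fun j _ => hterm j, ← Finset.smul_sum, ← Finset.mul_sum,
            ← ιC_eq_sum, div_eq_mul_inv]
        rw [hT1, hT2, hT3, zero_add]

end
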